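/- Let q ∈ (0,1) and ν > -1 with 4(1-q)(1-q^ν) > q^ν. Then for every z in the open unit disk U, the normalized Jackson second q-Bessel function satisfies |h_ν^{(2)}(z;q)| ≤ 4(1-q)(1-q^ν) / (4(1-q)(1-q^ν) - q^ν). -/

import Mathlib

open Complex

/-- q-Pochhammer symbol (a;q)_n = ∏_{k=1}^n (1 - a q^{k-1}). -/
noncomputable def qPoch (a q : ℝ) (n : ℕ) : ℝ :=
  ∏ k ∈ Finset.range n, (1 - a * q ^ k)

/-- Coefficients of the normalized Jackson second q-Bessel function. -/
noncomputable def K (q ν : ℝ) (n : ℕ) : ℝ :=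
  (-1) ^ n * q ^ ((n : ℝ) * ((n : ℝ) + ν)) /
    (4 ^ n * qPoch q q n * qPoch (q ^ (ν + 1)) q n)

/-- Normalized Jackson second q-Bessel function h_ν^{(2)}(z;q). -/
noncomputable def h2 (q ν : ℝ) (z : ℂ) : ℂ :=
  ∑' n : ℕ, (K q ν n : ℂ) * z ^ (n + 1)

/-- Derivative of the normalized Jackson second q-Bessel function. -/
noncomputable def h2' (q ν : ℝ) (z : ℂ) : ℂ :=
  ∑' n : ℕ, ((n : ℂ) + 1) * (K q ν n : ℂ) * z ^ n

/-- m-th partial sum of h_ν^{(2)}(z;q). -/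
noncomputable def h2p (q ν : ℝ) (m : ℕ) (z : ℂ) : ℂ :=
  z + ∑ n ∈ Finset.Icc 1 m, (K q ν n : ℂ) * z ^ (n + 1)

/-- Derivative of the m-th partial sum of h_ν^{(2)}(z;q). -/
noncomputable def h2p' (q ν : ℝ) (m : ℕ) (z : ℂ) : ℂ :=
  1 + ∑ n ∈ Finset.Icc 1 m, ((n : ℂ) + 1) * (K q ν n : ℂ) * z ^ n

theorem stmt0 (q ν : ℝ) (hq : q ∈ Set.Ioo (0 : ℝ) 1) (hν : -1 < ν)
    (hc : 4 * (1 - q) * (1 - q ^ ν) > q ^ ν) :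
    ∀ z : ℂ, ‖z‖ < 1 →
      ‖h2 q ν z‖ ≤ 4 * (1 - q) * (1 - q ^ ν) / (4 * (1 - q) * (1 - q ^ ν) - q ^ ν) := by
  obtain ⟨hq0, hq1⟩ := hq
  intro z hz
  have hB : (0:ℝ) < q ^ ν := Real.rpow_pos_of_pos hq0 ν
  have hA : (0:ℝ) < 4 * (1 - q) * (1 - q ^ ν) := lt_trans hB hc
  have h1q : (0:ℝ) < 1 - q := by nlinarith
  have h1qν : (0:ℝ) < 1 - q ^ ν := by nlinarith
  set r : ℝ := q ^ ν / (4 * (1 - q) * (1 - q ^ ν)) with hr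
  have hr0 : 0 ≤ r := by positivity
  have hr1 : r < 1 := (div_lt_one hA).2 hc
  have hP1 : ∀ n : ℕ, (1 - q) ^ n ≤ qPoch q q n := by
    intro n
    unfold qPoch
    have h := Finset.prod_le_prod (s := Finset.range n) (f := fun _ => 1 - q)
      (g := fun k => 1 - q * q ^ k) ?_ ?_
    · simpa using h
    · intro k _; positivity
    · intro k _
      have : q * q ^ k ≤ q := by
        calc q * q ^ k ≤ q * 1 := by
              apply mul_le_mul_of_nonneg_left _ hq0.le
              exact pow_le_one₀ hq0.le hq1.le
          _ = q := mul_one q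
      linarith
  have hP2 : ∀ n : ℕ, (1 - q ^ ν) ^ n ≤ qPoch (q ^ (ν + 1)) q n := by
    intro n
    unfold qPoch
    have h := Finset.prod_le_prod (s := Finset.range n) (f := fun _ => 1 - q ^ ν)
      (g := fun k => 1 - q ^ (ν + 1) * q ^ k) ?_ ?_
    · simpa using h
    · intro k _; positivity
    · intro k _
      have : q ^ (ν + 1) * q ^ k ≤ q ^ ν := by
        rw [← Real.rpow_natCast q k, ← Real.rpow_add hq0]
        apply Real.rpow_le_rpow_of_exponent_ge hq0 hq1.le
        have : (0:ℝ) ≤ (k:ℝ) := Nat.cast_nonneg k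
        linarith
      linarith
  have hKbound : ∀ n : ℕ, |K q ν n| ≤ r ^ n := by
    intro n
    have hP1pos : 0 < qPoch q q n := lt_of_lt_of_le (by positivity) (hP1 n)
    have hP2pos : 0 < qPoch (q ^ (ν + 1)) q n := lt_of_lt_of_le (by positivity) (hP2 n)
    have habs : |K q ν n| = q ^ ((n : ℝ) * ((n : ℝ) + ν)) /
        (4 ^ n * qPoch q q n * qPoch (q ^ (ν + 1)) q n) := by
      unfold K
      rw [abs_div, abs_mul]
      have h4 : (0:ℝ) < 4 ^ n := by positivity
      rw [abs_of_pos (Real.rpow_pos_of_pos hq0 _), _root_.abs_pow, abs_neg, abs_one, one_pow, one_mul,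
        abs_of_pos (by positivity : (0:ℝ) < 4 ^ n * qPoch q q n * qPoch (q ^ (ν + 1)) q n)]
    rw [habs, hr, div_pow]
    apply div_le_div₀ (by positivity)
    · rw [← Real.rpow_natCast (q ^ ν) n, ← Real.rpow_mul hq0.le]
      apply Real.rpow_le_rpow_of_exponent_ge hq0 hq1.le
      nlinarith [Nat.cast_nonneg (α := ℝ) n]
    · positivity
    · rw [mul_pow, mul_pow]
      have h4 : ((4:ℝ))^n * (1-q)^n * (1-q^ν)^n ≤ 4^n * qPoch q q n * qPoch (q^(ν+1)) q n := by
        apply mul_le_mul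
        · apply mul_le_mul_of_nonneg_left (hP1 n) (by positivity)
        · exact hP2 n
        · positivity
        · positivity
      exact h4
  have hterm : ∀ n : ℕ, ‖(K q ν n : ℂ) * z ^ (n+1)‖ ≤ r ^ n := by
    intro n
    rw [norm_mul, norm_pow, Complex.norm_real, Real.norm_eq_abs]
    calc |K q ν n| * ‖z‖ ^ (n+1) ≤ |K q ν n| * 1 :=
          mul_le_mul_of_nonneg_left (pow_le_one₀ (norm_nonneg z) hz.le) (abs_nonneg _)
      _ = |K q ν n| := mul_one _
      _ ≤ r ^ n := hKbound n
  have hgeo : Summable (fun n : ℕ => r ^ n) := summable_geometric_of_lt_one hr0 hr1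
  have hsum : Summable (fun n : ℕ => ‖(K q ν n : ℂ) * z ^ (n+1)‖) :=
    Summable.of_nonneg_of_le (fun n => norm_nonneg _) hterm hgeo
  have h1 : ‖h2 q ν z‖ ≤ ∑' n : ℕ, ‖(K q ν n : ℂ) * z ^ (n+1)‖ := by
    exact norm_tsum_le_tsum_norm hsum
  have h2le : (∑' n : ℕ, ‖(K q ν n : ℂ) * z ^ (n+1)‖) ≤ ∑' n : ℕ, r ^ n :=
    Summable.tsum_le_tsum hterm hsum hgeo
  have h3 : (∑' n : ℕ, r ^ n) = (1 - r)⁻¹ := tsum_geometric_of_lt_one hr0 hr1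
  have h4 : (1 - r)⁻¹ = 4 * (1 - q) * (1 - q ^ ν) / (4 * (1 - q) * (1 - q ^ ν) - q ^ ν) := by
    rw [hr, one_sub_div hA.ne', inv_div]
  linarith [h1, h2le, h3 ▸ h2le]
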